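/- arXiv:2104.08849 — 5 statements merged into one kernel-verified Lean document; each statement's English description precedes it below -/
import Mathlib

section
/- If η has distribution function x ↦ φ(e^{-x}) where φ is the Laplace transform of a positive random variable ν with E|ln ν| < ∞, then E[η] = γ + E[ln ν], where γ is the Euler–Mascheroni constant. -/
open MeasureTheory Real Set Filter Asymptotics
open scoped Topology ENNReal NNReal

lemma aux_mellin :
    MellinConvergent (fun t => Real.log t • ((Real.exp (-t) : ℝ) : ℂ)) 1 ∧
      HasDerivAt (mellin fun t => ((Real.exp (-t) : ℝ) : ℂ))
        (mellin (fun t => Real.log t • ((Real.exp (-t) : ℝ) : ℂ)) 1) 1 := by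
  refine mellin_hasDerivAt_of_isBigO_rpow (E := ℂ) (a := 2) (b := 0) ?_ ?_ (by norm_num) ?_
    (by norm_num)
  · refine (Continuous.continuousOn ?_).locallyIntegrableOn measurableSet_Ioi
    exact Complex.continuous_ofReal.comp (Real.continuous_exp.comp continuous_neg)
  · rw [← isBigO_norm_left]
    simp_rw [Complex.norm_real, isBigO_norm_left]
    simpa only [neg_one_mul] using (isLittleO_exp_neg_mul_rpow_atTop zero_lt_one _).isBigO
  · simp_rw [neg_zero, rpow_zero]
    refine isBigO_const_of_tendsto (?_ : Tendsto _ _ (𝓝 (1 : ℂ))) one_ne_zero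
    rw [(by simp : (1 : ℂ) = Real.exp (-0))]
    exact (Complex.continuous_ofReal.comp
      (Real.continuous_exp.comp continuous_neg)).continuousWithinAt

lemma mellin_val : mellin (fun t => Real.log t • ((Real.exp (-t) : ℝ) : ℂ)) 1
    = ((∫ t in Ioi (0:ℝ), Real.log t * Real.exp (-t)) : ℝ) := by
  rw [mellin]
  simp_rw [sub_self, Complex.cpow_zero, one_smul, Complex.real_smul, ← Complex.ofReal_mul]
  exact integral_ofReal

lemma integrableOn_log_mul_exp :
    IntegrableOn (fun t : ℝ => Real.log t * Real.exp (-t)) (Ioi 0) := by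
  have h := aux_mellin.1
  unfold MellinConvergent at h
  simp_rw [sub_self, Complex.cpow_zero, one_smul, Complex.real_smul, ← Complex.ofReal_mul] at h
  have h2 := h.re
  simp only [RCLike.re_to_complex, Complex.ofReal_re] at h2
  exact h2

lemma integral_log_mul_exp :
    ∫ t in Ioi (0:ℝ), Real.log t * Real.exp (-t) = -Real.eulerMascheroniConstant := by
  have hd := aux_mellin.2
  rw [← Complex.GammaIntegral_eq_mellin, mellin_val] at hd
  have h2 : HasDerivAt Complex.Gamma
      (((∫ t in Ioi (0:ℝ), Real.log t * Real.exp (-t)) : ℝ) : ℂ) 1 := by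
    refine hd.congr_of_eventuallyEq ?_
    have hmem : {s : ℂ | 0 < s.re} ∈ 𝓝 (1 : ℂ) := by
      refine IsOpen.mem_nhds ?_ (by norm_num)
      exact isOpen_lt continuous_const Complex.continuous_re
    filter_upwards [hmem] with s hs
    exact Complex.Gamma_eq_integral hs
  have := h2.unique Complex.hasDerivAt_Gamma_one
  rw [show (-(Real.eulerMascheroniConstant) : ℂ) = ((-Real.eulerMascheroniConstant : ℝ) : ℂ) by
    push_cast; ring] at this
  exact_mod_cast this

/-- The standard exponential distribution on `ℝ`. -/
noncomputable def expM : Measure ℝ :=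
  (volume.restrict (Ioi 0)).withDensity (fun t => ENNReal.ofReal (Real.exp (-t)))

lemma expM_eq : expM = (volume.restrict (Ioi 0)).withDensity
    (fun t => ((Real.toNNReal (Real.exp (-t)) : ℝ≥0) : ℝ≥0∞)) := rfl

lemma exp_neg_intOn (a : ℝ) : IntegrableOn (fun t : ℝ => Real.exp (-t)) (Ici a) := by
  have := exp_neg_integrableOn_Ioi a (by norm_num : (0:ℝ) < 1)
  simp only [neg_one_mul, one_mul] at this
  rwa [integrableOn_Ici_iff_integrableOn_Ioi]

lemma expM_Ici {a : ℝ} (ha : 0 < a) : expM (Ici a) = ENNReal.ofReal (Real.exp (-a)) := by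
  rw [expM, withDensity_apply _ measurableSet_Ici, Measure.restrict_restrict measurableSet_Ici]
  have h1 : Ici a ∩ Ioi (0:ℝ) = Ici a := inter_eq_left.mpr (fun t ht => lt_of_lt_of_le ha ht)
  rw [h1]
  rw [← ofReal_integral_eq_lintegral_ofReal (exp_neg_intOn a)
    (ae_of_all _ fun t => (Real.exp_pos _).le)]
  rw [integral_Ici_eq_integral_Ioi, integral_exp_neg_Ioi]

instance : IsProbabilityMeasure expM := by
  constructor
  rw [expM, withDensity_apply _ MeasurableSet.univ, Measure.restrict_univ]
  rw [← ofReal_integral_eq_lintegral_ofReal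
    ((integrableOn_Ici_iff_integrableOn_Ioi).mp (exp_neg_intOn 0))
    (ae_of_all _ fun t => (Real.exp_pos _).le)]
  rw [integral_exp_neg_Ioi_zero, ENNReal.ofReal_one]

lemma integrable_log_expM : Integrable Real.log expM := by
  rw [expM, integrable_withDensity_iff measurable_neg.exp.ennreal_ofReal
    (ae_of_all _ fun x => ENNReal.ofReal_lt_top)]
  have h1 : (fun t : ℝ => Real.log t * (ENNReal.ofReal (Real.exp (-t))).toReal)
      = fun t => Real.log t * Real.exp (-t) := by
    funext t; rw [ENNReal.toReal_ofReal (Real.exp_nonneg _)]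
  rw [h1]
  exact integrableOn_log_mul_exp

lemma integral_log_expM : ∫ t, Real.log t ∂expM = -Real.eulerMascheroniConstant := by
  rw [expM_eq, integral_withDensity_eq_integral_smul measurable_neg.exp.real_toNNReal]
  rw [← integral_log_mul_exp]
  apply integral_congr_ae
  filter_upwards [ae_restrict_mem measurableSet_Ioi] with t _
  simp [NNReal.smul_def, Real.coe_toNNReal _ (Real.exp_nonneg _), mul_comm]

/-- If `η` has distribution function `x ↦ φ(e^{-x})`, where `φ` is the Laplace
transform of a positive random variable `ν` with `E|ln ν| < ∞`, then
`E[η] = γ + E[ln ν]`. -/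
theorem mean_delta_eq_gamma_add_meanLog
    {Ω : Type*} [MeasurableSpace Ω] (μ : Measure Ω) [IsProbabilityMeasure μ]
    {Ω' : Type*} [MeasurableSpace Ω'] (μ' : Measure Ω') [IsProbabilityMeasure μ']
    (ν : Ω → ℝ) (hν : Measurable ν) (hνpos : ∀ᵐ ω ∂μ, 0 < ν ω)
    (hlog : Integrable (fun ω => Real.log (ν ω)) μ)
    (φ : ℝ → ℝ) (hφ : ∀ u, 0 ≤ u → φ u = ∫ ω, Real.exp (-u * ν ω) ∂μ)
    (η : Ω' → ℝ) (hη : Measurable η) (hηint : Integrable η μ')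
    (hcdf : ∀ x : ℝ, (μ' {ω | η ω ≤ x}).toReal = φ (Real.exp (-x))) :
    ∫ ω, η ω ∂μ' = Real.eulerMascheroniConstant + ∫ ω, Real.log (ν ω) ∂μ := by
  set T : Ω × ℝ → ℝ := fun p => Real.log (ν p.1) - Real.log p.2 with hTdef
  have hT : Measurable T :=
    ((Real.measurable_log.comp hν).comp measurable_fst).sub
      (Real.measurable_log.comp measurable_snd)
  -- law equality
  have hmap : μ'.map η = (μ.prod expM).map T := by
    refine Measure.ext_of_Iic _ _ fun x => ?_
    rw [Measure.map_apply hη measurableSet_Iic, Measure.map_apply hT measurableSet_Iic,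
      Measure.prod_apply (hT measurableSet_Iic)]
    have hae : ∀ᵐ ω ∂μ, expM (Prod.mk ω ⁻¹' (T ⁻¹' Iic x))
        = ENNReal.ofReal (Real.exp (-(Real.exp (-x) * ν ω))) := by
      filter_upwards [hνpos] with ω hω
      have hc : 0 < ν ω * Real.exp (-x) := mul_pos hω (Real.exp_pos _)
      have hpre : MeasurableSet (Prod.mk ω ⁻¹' (T ⁻¹' Iic x)) :=
        measurable_prodMk_left (hT measurableSet_Iic)
      have hset : Prod.mk ω ⁻¹' (T ⁻¹' Iic x) ∩ Ioi 0 = Ici (ν ω * Real.exp (-x)) := by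
        ext t
        simp only [mem_inter_iff, mem_preimage, mem_Iic, mem_Ioi, mem_Ici, hTdef]
        constructor
        · rintro ⟨h1, h2⟩
          have h3 : Real.log (ν ω) ≤ x + Real.log t := by linarith
          have h4 := Real.exp_le_exp.mpr h3
          rw [Real.exp_log hω, Real.exp_add, Real.exp_log h2] at h4
          have h5 : Real.exp (-x) * Real.exp x = 1 := by
            rw [← Real.exp_add]; simp
          nlinarith [mul_le_mul_of_nonneg_right h4 (Real.exp_pos (-x)).le]
        · intro h
          have ht : 0 < t := lt_of_lt_of_le hc h
          refine ⟨?_, ht⟩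
          have h5 := Real.log_le_log hc h
          rw [Real.log_mul hω.ne' (Real.exp_ne_zero _), Real.log_exp] at h5
          linarith
      have : expM (Prod.mk ω ⁻¹' (T ⁻¹' Iic x)) = expM (Ici (ν ω * Real.exp (-x))) := by
        rw [expM, withDensity_apply _ hpre, withDensity_apply _ measurableSet_Ici,
          Measure.restrict_restrict hpre, Measure.restrict_restrict measurableSet_Ici, hset]
        have h2 : Ici (ν ω * Real.exp (-x)) ∩ Ioi (0:ℝ) = Ici (ν ω * Real.exp (-x)) :=
          inter_eq_left.mpr (fun t ht => lt_of_lt_of_le hc ht)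
        rw [h2]
      rw [this, expM_Ici hc]
      congr 1
      ring_nf
    rw [lintegral_congr_ae hae]
    have hint : Integrable (fun ω => Real.exp (-(Real.exp (-x) * ν ω))) μ := by
      refine (integrable_const (1:ℝ)).mono' ?_ ?_
      · exact (Real.measurable_exp.comp ((measurable_const.mul hν).neg)).aestronglyMeasurable
      · filter_upwards [hνpos] with ω hω
        rw [Real.norm_eq_abs, abs_of_pos (Real.exp_pos _)]
        exact Real.exp_le_one_iff.mpr
          (neg_nonpos.mpr (mul_nonneg (Real.exp_nonneg _) hω.le))
    rw [← ofReal_integral_eq_lintegral_ofReal hint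
      (ae_of_all _ fun ω => (Real.exp_pos _).le)]
    have : ∫ ω, Real.exp (-(Real.exp (-x) * ν ω)) ∂μ = φ (Real.exp (-x)) := by
      rw [hφ _ (Real.exp_nonneg _)]
      congr 1; funext ω; ring_nf
    rw [this]
    have := hcdf x
    have heq : μ' {ω | η ω ≤ x} = μ' (η ⁻¹' Iic x) := rfl
    rw [← heq, ← this, ENNReal.ofReal_toReal (measure_ne_top _ _)]
  -- integrability over the product
  have hmapfst : (μ.prod expM).map Prod.fst = μ := by
    rw [Measure.map_fst_prod]; simp
  have hmapsnd : (μ.prod expM).map Prod.snd = expM := by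
    rw [Measure.map_snd_prod]; simp
  have hlogE : Integrable Real.log expM := integrable_log_expM
  have hfst : Integrable (fun p : Ω × ℝ => Real.log (ν p.1)) (μ.prod expM) := by
    have h := (integrable_map_measure (μ := μ.prod expM) (f := Prod.fst)
      (g := fun ω => Real.log (ν ω))
      (by rw [hmapfst]; exact hlog.aestronglyMeasurable)
      measurable_fst.aemeasurable).mp (by rw [hmapfst]; exact hlog)
    simpa [Function.comp_def] using h
  have hsnd : Integrable (fun p : Ω × ℝ => Real.log p.2) (μ.prod expM) := by
    have h := (integrable_map_measure (μ := μ.prod expM) (f := Prod.snd)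
      (g := Real.log)
      (by rw [hmapsnd]; exact hlogE.aestronglyMeasurable)
      measurable_snd.aemeasurable).mp (by rw [hmapsnd]; exact hlogE)
    simpa [Function.comp_def] using h
  -- compute
  have e0 : ∫ ω, η ω ∂μ' = ∫ p, T p ∂(μ.prod expM) := by
    have h1 : ∫ ω, η ω ∂μ' = ∫ x, x ∂(μ'.map η) :=
      (integral_map hη.aemeasurable aestronglyMeasurable_id).symm
    rw [h1, hmap,
      integral_map (φ := T) hT.aemeasurable (f := fun x : ℝ => x) aestronglyMeasurable_id]
  have e1 : ∫ p : Ω × ℝ, Real.log (ν p.1) ∂(μ.prod expM) = ∫ ω, Real.log (ν ω) ∂μ := by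
    have h := integral_map (φ := Prod.fst) (μ := μ.prod expM)
      measurable_fst.aemeasurable (f := fun ω => Real.log (ν ω))
      (by rw [hmapfst]; exact hlog.aestronglyMeasurable)
    rw [hmapfst] at h
    exact h.symm
  have e2 : ∫ p : Ω × ℝ, Real.log p.2 ∂(μ.prod expM) = -Real.eulerMascheroniConstant := by
    have h := integral_map (φ := Prod.snd) (μ := μ.prod expM)
      measurable_snd.aemeasurable (f := Real.log)
      (by rw [hmapsnd]; exact hlogE.aestronglyMeasurable)
    rw [hmapsnd] at h
    rw [← h, integral_log_expM]
  rw [e0, hTdef]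
  rw [integral_sub hfst hsnd, e1, e2]
  ring
end

section
/- If ν has a strictly stable distribution with Laplace transform E[e^{-uν}] = exp(-c u^α), c > 0, 0 < α < 1, then E[ln ν] = (γ(1-α) + ln c)/α, where γ is the Euler–Mascheroni constant. -/
open MeasureTheory Real Set Filter Topology

lemma aux_integrableOn_rpow_mul_exp_neg_mul_rpow {p q b : ℝ} (hp : 0 < p) (hq : -1 < q)
    (hb : 0 < b) :
    IntegrableOn (fun x : ℝ => x ^ q * rexp (-b * x ^ p)) (Ioi 0) := by
  have hq' : (-1 : ℝ) < (q + 1) / p - 1 := by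
    have : 0 < (q + 1) / p := div_pos (by linarith) hp
    linarith
  have hf : IntegrableOn (fun y : ℝ => y ^ ((q + 1) / p - 1) * rexp (-b * y)) (Ioi 0) := by
    have := integrableOn_rpow_mul_exp_neg_mul_rpow hq' one_pos hb
    simpa [rpow_one] using this
  have h2 := (integrableOn_Ioi_comp_rpow_iff'
      (fun y : ℝ => y ^ ((q + 1) / p - 1) * rexp (-b * y)) hp.ne').mpr hf
  refine h2.congr_fun (fun x hx => ?_) measurableSet_Ioi
  have hx0 : (0 : ℝ) < x := hx
  have hexp : p - 1 + p * ((q + 1) / p - 1) = q := by field_simp; ring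
  dsimp only
  rw [smul_eq_mul, ← rpow_mul hx0.le, ← mul_assoc, ← rpow_add hx0, hexp]

lemma aux_mellin_s10 {Ω : Type*} [MeasurableSpace Ω] (μ : Measure Ω) [IsProbabilityMeasure μ]
    (c α : ℝ) (hc : 0 < c) (hα : 0 < α)
    (ν : Ω → ℝ) (hν : Measurable ν) (hνpos : ∀ᵐ ω ∂μ, 0 < ν ω)
    (hlap : ∀ u : ℝ, 0 ≤ u → ∫ ω, Real.exp (-u * ν ω) ∂μ = Real.exp (-c * u ^ α))
    {s : ℝ} (hs : 0 < s) :
    Integrable (fun ω => ν ω ^ (-s)) μ ∧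
      Real.Gamma s * ∫ ω, ν ω ^ (-s) ∂μ = c ^ (-(s / α)) * ((1 / α) * Real.Gamma (s / α)) := by
  have hmeas : Measurable fun p : Ω × ℝ =>
      ENNReal.ofReal (p.2 ^ (s - 1) * rexp (-p.2 * ν p.1)) := by
    apply Measurable.ennreal_ofReal
    have : Measurable fun p : Ω × ℝ => p.2 ^ (s - 1) * rexp (-p.2 * ν p.1) := by
      have h2 : Measurable fun p : Ω × ℝ => (p.2 : ℝ) ^ (s - 1) := by fun_prop
      exact h2.mul ((measurable_snd.neg.mul (hν.comp measurable_fst)).exp)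
    exact this
  -- Step 1 : inner integral over ω
  have step1 : ∀ u : ℝ, 0 < u →
      (∫⁻ ω, ENNReal.ofReal (u ^ (s - 1) * rexp (-u * ν ω)) ∂μ)
        = ENNReal.ofReal (u ^ (s - 1) * rexp (-c * u ^ α)) := by
    intro u hu
    have hint : Integrable (fun ω => rexp (-u * ν ω)) μ := by
      refine Integrable.mono' (integrable_const 1)
        ((hν.const_mul (-u)).exp.aestronglyMeasurable) ?_
      · filter_upwards [hνpos] with ω hω
        rw [norm_eq_abs, abs_of_pos (exp_pos _)]
        exact exp_le_one_iff.mpr (by nlinarith)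
    have hnn : 0 ≤ᵐ[μ] fun ω => rexp (-u * ν ω) :=
      Eventually.of_forall fun ω => (exp_pos _).le
    calc (∫⁻ ω, ENNReal.ofReal (u ^ (s - 1) * rexp (-u * ν ω)) ∂μ)
        = ENNReal.ofReal (u ^ (s - 1)) * ∫⁻ ω, ENNReal.ofReal (rexp (-u * ν ω)) ∂μ := by
          simp_rw [ENNReal.ofReal_mul (rpow_nonneg hu.le _)]
          exact lintegral_const_mul _ ((hν.const_mul (-u)).exp.ennreal_ofReal)
      _ = ENNReal.ofReal (u ^ (s - 1)) * ENNReal.ofReal (∫ ω, rexp (-u * ν ω) ∂μ) := by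
          rw [ofReal_integral_eq_lintegral_ofReal hint hnn]
      _ = ENNReal.ofReal (u ^ (s - 1) * rexp (-c * u ^ α)) := by
          rw [hlap u hu.le, ← ENNReal.ofReal_mul (rpow_nonneg hu.le _)]
  -- Step 2 : inner integral over u, for a.e. ω
  have step2 : ∀ᵐ ω ∂μ, (∫⁻ u in Ioi 0, ENNReal.ofReal (u ^ (s - 1) * rexp (-u * ν ω)))
      = ENNReal.ofReal (Real.Gamma s * ν ω ^ (-s)) := by
    filter_upwards [hνpos] with ω hω
    have hint : IntegrableOn (fun u : ℝ => u ^ (s - 1) * rexp (-u * ν ω)) (Ioi 0) := by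
      have := aux_integrableOn_rpow_mul_exp_neg_mul_rpow one_pos
        (by linarith : (-1 : ℝ) < s - 1) hω
      apply this.congr_fun (fun x hx => ?_) measurableSet_Ioi
      rw [rpow_one]; ring_nf
    have hnn : 0 ≤ᵐ[volume.restrict (Ioi 0)] fun u : ℝ => u ^ (s - 1) * rexp (-u * ν ω) := by
      filter_upwards [ae_restrict_mem measurableSet_Ioi] with u hu
      exact mul_nonneg (rpow_nonneg (le_of_lt hu) _) (exp_pos _).le
    rw [← ofReal_integral_eq_lintegral_ofReal hint hnn]
    congr 1
    have : ∀ u : ℝ, u ^ (s - 1) * rexp (-u * ν ω) = u ^ (s - 1) * rexp (-(ν ω * u)) := by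
      intro u; ring_nf
    rw [funext this, integral_rpow_mul_exp_neg_mul_Ioi hs hω]
    rw [one_div, inv_rpow hω.le, ← rpow_neg hω.le]
    ring
  -- Step 3 : the u-side value
  have step3 : (∫⁻ u in Ioi 0, ENNReal.ofReal (u ^ (s - 1) * rexp (-c * u ^ α)))
      = ENNReal.ofReal (c ^ (-(s / α)) * ((1 / α) * Real.Gamma (s / α))) := by
    have hint := aux_integrableOn_rpow_mul_exp_neg_mul_rpow hα (by linarith : (-1 : ℝ) < s - 1) hc
    have hnn : 0 ≤ᵐ[volume.restrict (Ioi 0)] fun u : ℝ => u ^ (s - 1) * rexp (-c * u ^ α) := by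
      filter_upwards [ae_restrict_mem measurableSet_Ioi] with u hu
      exact mul_nonneg (rpow_nonneg (le_of_lt hu) _) (exp_pos _).le
    rw [← ofReal_integral_eq_lintegral_ofReal hint hnn,
      integral_rpow_mul_exp_neg_mul_rpow hα (by linarith : (-1 : ℝ) < s - 1) hc]
    congr 1
    rw [show s - 1 + 1 = s by ring, neg_div]
    ring
  -- Tonelli
  have main : (∫⁻ ω, ENNReal.ofReal (Real.Gamma s * ν ω ^ (-s)) ∂μ)
      = ENNReal.ofReal (c ^ (-(s / α)) * ((1 / α) * Real.Gamma (s / α))) := by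
    calc (∫⁻ ω, ENNReal.ofReal (Real.Gamma s * ν ω ^ (-s)) ∂μ)
        = ∫⁻ ω, (∫⁻ u in Ioi 0, ENNReal.ofReal (u ^ (s - 1) * rexp (-u * ν ω))) ∂μ :=
          (lintegral_congr_ae step2).symm
      _ = ∫⁻ u in Ioi 0, (∫⁻ ω, ENNReal.ofReal (u ^ (s - 1) * rexp (-u * ν ω)) ∂μ) :=
          lintegral_lintegral_swap hmeas.aemeasurable
      _ = ∫⁻ u in Ioi 0, ENNReal.ofReal (u ^ (s - 1) * rexp (-c * u ^ α)) := by
          refine setLIntegral_congr_fun measurableSet_Ioi (fun u hu => ?_)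
          exact step1 u hu
      _ = ENNReal.ofReal (c ^ (-(s / α)) * ((1 / α) * Real.Gamma (s / α))) := step3
  have hmg : Measurable fun ω => Real.Gamma s * ν ω ^ (-s) := by
    have h2 : Measurable fun ω => ν ω ^ (-s) := by fun_prop
    exact h2.const_mul _
  have hnng : 0 ≤ᵐ[μ] fun ω => Real.Gamma s * ν ω ^ (-s) := by
    filter_upwards [hνpos] with ω hω
    exact mul_nonneg (Real.Gamma_pos_of_pos hs).le (rpow_nonneg hω.le _)
  have hintg : Integrable (fun ω => Real.Gamma s * ν ω ^ (-s)) μ := by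
    refine ⟨hmg.aestronglyMeasurable, ?_⟩
    rw [hasFiniteIntegral_iff_ofReal hnng, main]
    exact ENNReal.ofReal_lt_top
  have hint : Integrable (fun ω => ν ω ^ (-s)) μ := by
    have h2 := hintg.const_mul (Real.Gamma s)⁻¹
    have hG := (Real.Gamma_pos_of_pos hs).ne'
    refine h2.congr (Eventually.of_forall fun ω => ?_)
    field_simp
  refine ⟨hint, ?_⟩
  have heq : ENNReal.ofReal (∫ ω, Real.Gamma s * ν ω ^ (-s) ∂μ)
      = ENNReal.ofReal (c ^ (-(s / α)) * ((1 / α) * Real.Gamma (s / α))) := by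
    rw [ofReal_integral_eq_lintegral_ofReal hintg hnng, main]
  rw [integral_const_mul] at heq
  have h1 : 0 ≤ Real.Gamma s * ∫ ω, ν ω ^ (-s) ∂μ :=
    mul_nonneg (Real.Gamma_pos_of_pos hs).le
      (integral_nonneg_of_ae (by filter_upwards [hνpos] with ω hω; exact rpow_nonneg hω.le _))
  have h2 : 0 ≤ c ^ (-(s / α)) * ((1 / α) * Real.Gamma (s / α)) :=
    mul_nonneg (rpow_nonneg hc.le _)
      (mul_nonneg (by positivity) (Real.Gamma_pos_of_pos (div_pos hs hα)).le)
  exact (ENNReal.ofReal_eq_ofReal_iff h1 h2).mp heq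

/-- If `ν` has a strictly stable distribution with Laplace transform
`E[e^{-uν}] = exp(-c·u^α)`, `c > 0`, `0 < α < 1`, then
`E[ln ν] = (γ(1-α) + ln c)/α`. -/
theorem stable_mean_log
    {Ω : Type*} [MeasurableSpace Ω] (μ : Measure Ω) [IsProbabilityMeasure μ]
    (c α : ℝ) (hc : 0 < c) (hα : 0 < α) (hα1 : α < 1)
    (ν : Ω → ℝ) (hν : Measurable ν) (hνpos : ∀ᵐ ω ∂μ, 0 < ν ω)
    (hlap : ∀ u : ℝ, 0 ≤ u → ∫ ω, Real.exp (-u * ν ω) ∂μ = Real.exp (-c * u ^ α))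
    (hlog : Integrable (fun ω => Real.log (ν ω)) μ) :
    ∫ ω, Real.log (ν ω) ∂μ
      = (Real.eulerMascheroniConstant * (1 - α) + Real.log c) / α := by
  set eul := Real.eulerMascheroniConstant with heul
  set k : ℝ := -(Real.log c) / α with hk
  set G : ℝ → ℝ := fun s => 1 - rexp (k * s) * Real.Gamma (1 + s / α) / Real.Gamma (1 + s)
    with hGdef
  have hG0 : G 0 = 0 := by simp [hGdef, Real.Gamma_one]
  -- derivative of G at 0
  have hA : HasDerivAt (fun s : ℝ => Real.Gamma (1 + s / α)) (-eul * (1 / α)) 0 := by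
    have hl : HasDerivAt (fun s : ℝ => 1 + s / α) (1 / α) 0 := by
      simpa using ((hasDerivAt_id (0 : ℝ)).div_const α).const_add 1
    have h := HasDerivAt.comp (𝕜 := ℝ) 0
      (show HasDerivAt Real.Gamma (-eul) (1 + (0 : ℝ) / α) by
        simpa using Real.hasDerivAt_Gamma_one) hl
    simpa [Function.comp_def] using h
  have hB : HasDerivAt (fun s : ℝ => Real.Gamma (1 + s)) (-eul) 0 := by
    have hl : HasDerivAt (fun s : ℝ => 1 + s) (1 : ℝ) 0 := by
      simpa using (hasDerivAt_id (0 : ℝ)).const_add 1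
    have h := HasDerivAt.comp (𝕜 := ℝ) 0
      (show HasDerivAt Real.Gamma (-eul) (1 + (0 : ℝ)) by
        simpa using Real.hasDerivAt_Gamma_one) hl
    simpa [Function.comp_def] using h
  have hE : HasDerivAt (fun s : ℝ => rexp (k * s)) k 0 := by
    have h := ((hasDerivAt_id (0 : ℝ)).const_mul k).exp
    simpa using h
  have hB0 : Real.Gamma (1 + (0 : ℝ)) ≠ 0 := by simp [Real.Gamma_one]
  have hGd : HasDerivAt G ((eul * (1 - α) + Real.log c) / α) 0 := by
    have h := ((hE.mul hA).div hB hB0).const_sub 1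
    refine h.congr_deriv ?_
    simp only [Pi.mul_apply, zero_div, add_zero, Real.Gamma_one, mul_zero, Real.exp_zero]
    rw [hk]
    field_simp
    ring
  -- limit of G s / s
  have h2 : Tendsto (fun s => G s / s) (𝓝[>] (0 : ℝ))
      (𝓝 ((eul * (1 - α) + Real.log c) / α)) := by
    have h := hasDerivAt_iff_tendsto_slope.mp hGd
    have hmono : 𝓝[>] (0 : ℝ) ≤ 𝓝[≠] (0 : ℝ) :=
      nhdsWithin_mono 0 fun x hx => ne_of_gt hx
    exact (h.mono_left hmono).congr fun s => by
      rw [slope_def_field, hG0, sub_zero, sub_zero]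
  -- integrability of ν^{-1/2}
  have hν2 : Integrable (fun ω => ν ω ^ (-((2 : ℝ)⁻¹))) μ :=
    (aux_mellin_s10 μ c α hc hα ν hν hνpos hlap (by norm_num : (0 : ℝ) < 2⁻¹)).1
  have hbound_int : Integrable
      (fun ω => 3 * |Real.log (ν ω)| + 4 * ν ω ^ (-((2 : ℝ)⁻¹))) μ :=
    (hlog.abs.const_mul 3).add (hν2.const_mul 4)
  -- dominated convergence
  have h1 : Tendsto (fun s : ℝ => ∫ ω, (1 - ν ω ^ (-s)) / s ∂μ) (𝓝[>] (0 : ℝ))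
      (𝓝 (∫ ω, Real.log (ν ω) ∂μ)) := by
    refine tendsto_integral_filter_of_dominated_convergence _ ?_ ?_ hbound_int ?_
    · refine Eventually.of_forall fun s => ?_
      have hm : Measurable fun ω => (1 - ν ω ^ (-s)) / s := by fun_prop
      exact hm.aestronglyMeasurable
    · have hmem : Ioc (0 : ℝ) 4⁻¹ ∈ 𝓝[>] (0 : ℝ) :=
        Ioc_mem_nhdsGT_of_mem ⟨le_refl 0, by norm_num⟩
      filter_upwards [hmem] with s hs
      filter_upwards [hνpos] with ω hω
      set x := ν ω with hxdef
      have hs0 : 0 < s := hs.1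
      have hs4 : s ≤ 4⁻¹ := hs.2
      have hxs : x ^ (-s) = rexp (-(s * Real.log x)) := by
        rw [rpow_def_of_pos hω]; congr 1; ring
      have hxsnn : 0 ≤ x ^ (-s) := rpow_nonneg hω.le _
      have key : |1 - x ^ (-s)| ≤ s * |Real.log x| * (1 + x ^ (-s)) := by
        rw [hxs]
        set t := s * Real.log x with htdef
        have habs : |t| = s * |Real.log x| := by
          rw [htdef, abs_mul, abs_of_pos hs0]
        rcases le_or_gt 0 t with ht | ht
        · have hle : rexp (-t) ≤ 1 := exp_le_one_iff.mpr (by linarith)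
          rw [abs_of_nonneg (by linarith)]
          have h1 : 1 - rexp (-t) ≤ t := by nlinarith [Real.add_one_le_exp (-t)]
          have h2 : t ≤ |t| := le_abs_self t
          have h3 : (1 : ℝ) ≤ 1 + rexp (-t) := by linarith [Real.exp_pos (-t)]
          calc 1 - rexp (-t) ≤ |t| := by linarith
            _ ≤ |t| * (1 + rexp (-t)) := le_mul_of_one_le_right (abs_nonneg t) h3
            _ = s * |Real.log x| * (1 + rexp (-t)) := by rw [habs]
        · have hge : 1 ≤ rexp (-t) := by
            rw [← Real.exp_zero]; exact exp_le_exp.mpr (by linarith)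
          rw [abs_of_nonpos (by linarith)]
          have hprod : rexp t * rexp (-t) = 1 := by
            rw [← Real.exp_add]; simp
          have h1 : rexp (-t) - 1 ≤ -t * rexp (-t) := by
            nlinarith [Real.add_one_le_exp t, Real.exp_pos (-t)]
          have h2 : -t ≤ |t| := neg_le_abs t
          have h3 : (0 : ℝ) < rexp (-t) := Real.exp_pos _
          calc -(1 - rexp (-t)) = rexp (-t) - 1 := by ring
            _ ≤ -t * rexp (-t) := h1
            _ ≤ |t| * rexp (-t) := by nlinarith
            _ ≤ |t| * (1 + rexp (-t)) := by nlinarith [abs_nonneg t]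
            _ = s * |Real.log x| * (1 + rexp (-t)) := by rw [habs]
      have hxs4 : x ^ (-s) ≤ 1 + x ^ (-((4 : ℝ)⁻¹)) := by
        rcases le_or_gt 1 x with h1 | h1
        · have h2 : x ^ (-s) ≤ 1 :=
            rpow_le_one_of_one_le_of_nonpos h1 (by linarith)
          have := rpow_nonneg hω.le (-((4 : ℝ)⁻¹))
          linarith
        · have h2 : x ^ (-s) ≤ x ^ (-((4 : ℝ)⁻¹)) :=
            rpow_le_rpow_of_exponent_ge hω h1.le (by linarith)
          linarith
      have hlog4 : |Real.log x| * x ^ (-((4 : ℝ)⁻¹))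
          ≤ |Real.log x| + 4 * x ^ (-((2 : ℝ)⁻¹)) := by
        rcases le_or_gt 1 x with h1 | h1
        · have h2 : x ^ (-((4 : ℝ)⁻¹)) ≤ 1 :=
            rpow_le_one_of_one_le_of_nonpos h1 (by norm_num)
          have h3 : (0 : ℝ) ≤ 4 * x ^ (-((2 : ℝ)⁻¹)) := by positivity
          nlinarith [abs_nonneg (Real.log x)]
        · have hxinv : (1 : ℝ) ≤ x⁻¹ := (one_le_inv₀ hω).mpr h1.le
          have h2 : |Real.log x| = Real.log x⁻¹ := by
            rw [Real.log_inv, abs_of_nonpos (Real.log_nonpos hω.le h1.le)]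
          have h3 : Real.log x⁻¹ ≤ 4 * x ^ (-((4 : ℝ)⁻¹)) := by
            have := Real.log_le_rpow_div (inv_nonneg.mpr hω.le)
              (by norm_num : (0 : ℝ) < 4⁻¹)
            rw [Real.inv_rpow hω.le, ← Real.rpow_neg hω.le] at this
            calc Real.log x⁻¹ ≤ x ^ (-((4 : ℝ)⁻¹)) / 4⁻¹ := this
              _ = 4 * x ^ (-((4 : ℝ)⁻¹)) := by ring
          have h4 : x ^ (-((4 : ℝ)⁻¹)) * x ^ (-((4 : ℝ)⁻¹)) = x ^ (-((2 : ℝ)⁻¹)) := by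
            rw [← Real.rpow_add hω]; norm_num
          have h5 : 0 ≤ x ^ (-((4 : ℝ)⁻¹)) := rpow_nonneg hω.le _
          have h6 : 0 ≤ |Real.log x| := abs_nonneg _
          nlinarith
      rw [norm_div, norm_eq_abs, norm_eq_abs, abs_of_pos hs0, div_le_iff₀ hs0]
      have hfin : |Real.log x| * (1 + x ^ (-s))
          ≤ 3 * |Real.log x| + 4 * x ^ (-((2 : ℝ)⁻¹)) := by
        have h7 : |Real.log x| * (1 + x ^ (-s))
            ≤ |Real.log x| * (2 + x ^ (-((4 : ℝ)⁻¹))) := by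
          have := abs_nonneg (Real.log x)
          nlinarith
        have h8 : |Real.log x| * (2 + x ^ (-((4 : ℝ)⁻¹)))
            = 2 * |Real.log x| + |Real.log x| * x ^ (-((4 : ℝ)⁻¹)) := by ring
        linarith
      calc |1 - x ^ (-s)| ≤ s * |Real.log x| * (1 + x ^ (-s)) := key
        _ = |Real.log x| * (1 + x ^ (-s)) * s := by ring
        _ ≤ (3 * |Real.log x| + 4 * x ^ (-((2 : ℝ)⁻¹))) * s := by
            have := mul_le_mul_of_nonneg_right hfin hs0.le
            linarith
    · filter_upwards [hνpos] with ω hω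
      have heqf : (fun s : ℝ => 1 - ν ω ^ (-s))
          = fun s => 1 - rexp (-Real.log (ν ω) * s) := by
        funext s; rw [rpow_def_of_pos hω]; congr 2; ring
      have hb : HasDerivAt (fun s : ℝ => rexp (-Real.log (ν ω) * s))
          (-Real.log (ν ω)) 0 := by
        have h := ((hasDerivAt_id (0 : ℝ)).const_mul (-Real.log (ν ω))).exp
        simpa using h
      have hd : HasDerivAt (fun s : ℝ => 1 - ν ω ^ (-s)) (Real.log (ν ω)) 0 := by
        rw [heqf]
        simpa using hb.const_sub 1
      have h := hasDerivAt_iff_tendsto_slope.mp hd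
      have hmono : 𝓝[>] (0 : ℝ) ≤ 𝓝[≠] (0 : ℝ) :=
        nhdsWithin_mono 0 fun x hx => ne_of_gt hx
      refine (h.mono_left hmono).congr fun s => ?_
      rw [slope_def_field, sub_zero]
      congr 1
      simp
  -- eventual equality
  have heqev : ∀ᶠ s in 𝓝[>] (0 : ℝ),
      ∫ ω, (1 - ν ω ^ (-s)) / s ∂μ = G s / s := by
    have hmem : Ioo (0 : ℝ) 1 ∈ 𝓝[>] (0 : ℝ) :=
      Ioo_mem_nhdsGT_of_mem ⟨le_refl 0, by norm_num⟩
    filter_upwards [hmem] with s hs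
    obtain ⟨hint, hval⟩ := aux_mellin_s10 μ c α hc hα ν hν hνpos hlap hs.1
    have hs0 : s ≠ 0 := ne_of_gt hs.1
    have hGam : Real.Gamma s ≠ 0 := (Real.Gamma_pos_of_pos hs.1).ne'
    have h1 : ∫ ω, (1 - ν ω ^ (-s)) / s ∂μ = (1 - ∫ ω, ν ω ^ (-s) ∂μ) / s := by
      rw [integral_div, integral_sub (integrable_const 1) hint, integral_const]
      simp
    rw [h1]
    congr 1
    have hI : ∫ ω, ν ω ^ (-s) ∂μ
        = c ^ (-(s / α)) * ((1 / α) * Real.Gamma (s / α)) / Real.Gamma s := by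
      rw [eq_div_iff hGam, mul_comm]; exact hval
    have hc' : c ^ (-(s / α)) = rexp (k * s) := by
      rw [rpow_def_of_pos hc, hk]
      congr 1
      field_simp
    have hg1 : Real.Gamma (1 + s / α) = (s / α) * Real.Gamma (s / α) := by
      rw [add_comm, Real.Gamma_add_one (by positivity : s / α ≠ 0)]
    have hg2 : Real.Gamma (1 + s) = s * Real.Gamma s := by
      rw [add_comm, Real.Gamma_add_one hs0]
    rw [hI, hGdef]
    simp only [hg1, hg2, hc']
    congr 1
    field_simp
  have h1' : Tendsto (fun s => G s / s) (𝓝[>] (0 : ℝ))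
      (𝓝 (∫ ω, Real.log (ν ω) ∂μ)) := Filter.Tendsto.congr' heqev h1
  exact tendsto_nhds_unique h1' h2
end

section
/- If η satisfies P(η > x) ~ 1/x as x → +∞ and P(η < -x) ≤ exp(-e^{x+1}) for x > 0, and (η_n) are i.i.d. copies of η, then for any β > 1 the random series Σ_{n=0}^∞ β^{-n} η_n converges almost surely. -/
open MeasureTheory ProbabilityTheory Filter

/-- If `η` satisfies `P(η > x) ~ 1/x` as `x → +∞` and
`P(η < -x) ≤ exp(-e^{x+1})` for `x > 0`, and `(η_n)` are i.i.d. copies of `η`,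
then for any `β > 1` the random series `Σ_{n=0}^∞ β^{-n} η_n` converges a.s. -/
theorem series_converges_superheavy
    {Ω : Type*} [MeasurableSpace Ω] (μ : Measure Ω) [IsProbabilityMeasure μ]
    (η : ℕ → Ω → ℝ) (hmeas : ∀ n, Measurable (η n))
    (hindep : iIndepFun η μ)
    (hident : ∀ n, Measure.map (η n) μ = Measure.map (η 0) μ)
    (htail : Tendsto (fun x : ℝ => x * (μ {ω | x < η 0 ω}).toReal) atTop (nhds 1))
    (hleft : ∀ x : ℝ, 0 < x → (μ {ω | η 0 ω < -x}).toReal ≤ Real.exp (-Real.exp (x + 1)))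
    (β : ℝ) (hβ : 1 < β) :
    ∀ᵐ ω ∂μ, Summable (fun n : ℕ => η n ω / β ^ n) := by
  set α : ℝ := (1 + β) / 2 with hα
  have hα1 : 1 < α := by rw [hα]; linarith
  have hα0 : 0 < α := by linarith
  have hαβ : α < β := by rw [hα]; linarith
  have hβ0 : 0 < β := by linarith
  -- the bad events
  set s : ℕ → Set Ω := fun n => {ω | α ^ n < |η n ω|} with hs
  -- transfer the measure of `s n` to the measure of the corresponding event for `η 0`
  have hkey : ∀ n, μ (s n) = μ {ω | α ^ n < |η 0 ω|} := by
    intro n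
    have hms : MeasurableSet {x : ℝ | α ^ n < |x|} :=
      measurableSet_lt measurable_const measurable_id.abs
    have h1 : s n = η n ⁻¹' {x : ℝ | α ^ n < |x|} := rfl
    have h2 : {ω | α ^ n < |η 0 ω|} = η 0 ⁻¹' {x : ℝ | α ^ n < |x|} := rfl
    rw [h1, h2, ← Measure.map_apply (hmeas n) hms, ← Measure.map_apply (hmeas 0) hms,
      hident n]
  -- eventual tail bound: P(|η0| > x) ≤ 3/x
  have hub : ∀ᶠ x : ℝ in atTop, (μ {ω | x < |η 0 ω|}).toReal ≤ 3 / x := by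
    filter_upwards [htail.eventually_lt_const (show (1:ℝ) < 2 by norm_num),
      eventually_ge_atTop (1 : ℝ)] with x hx2 hx1
    have hx0 : 0 < x := lt_of_lt_of_le one_pos hx1
    have hsub : {ω | x < |η 0 ω|} ⊆ {ω | x < η 0 ω} ∪ {ω | η 0 ω < -x} := by
      intro ω hω
      rcases lt_or_ge (η 0 ω) 0 with h | h
      · right
        simp only [Set.mem_setOf_eq]
        have : |η 0 ω| = -(η 0 ω) := abs_of_neg h
        simp only [Set.mem_setOf_eq] at hω
        linarith [hω, this.symm ▸ hω]
      · left
        have : |η 0 ω| = η 0 ω := abs_of_nonneg h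
        simpa only [Set.mem_setOf_eq, this] using hω
    have hB : (μ {ω | x < η 0 ω}).toReal ≤ 2 / x := by
      rw [le_div_iff₀ hx0]
      nlinarith [ENNReal.toReal_nonneg (a := μ {ω | x < η 0 ω})]
    have hC : (μ {ω | η 0 ω < -x}).toReal ≤ 1 / x := by
      refine (hleft x hx0).trans ?_
      have h1 : x + 1 ≤ Real.exp (x + 1) := by
        have := Real.add_one_le_exp (x + 1); linarith
      have h2 : Real.exp (x + 1) ≤ Real.exp (Real.exp (x + 1)) :=
        Real.exp_le_exp.mpr (by linarith [Real.add_one_le_exp (x+1)])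
      have hx_le : x ≤ Real.exp (Real.exp (x + 1)) := by linarith
      rw [Real.exp_neg, one_div]
      exact inv_anti₀ hx0 hx_le
    calc (μ {ω | x < |η 0 ω|}).toReal
        ≤ (μ {ω | x < η 0 ω} + μ {ω | η 0 ω < -x}).toReal :=
          ENNReal.toReal_mono (by finiteness)
            ((measure_mono hsub).trans (measure_union_le _ _))
      _ = (μ {ω | x < η 0 ω}).toReal + (μ {ω | η 0 ω < -x}).toReal :=
          ENNReal.toReal_add (measure_ne_top _ _) (measure_ne_top _ _)
      _ ≤ 2 / x + 1 / x := add_le_add hB hC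
      _ = 3 / x := by ring
  -- α^n → ∞
  have htend : Tendsto (fun n : ℕ => α ^ n) atTop atTop :=
    tendsto_pow_atTop_atTop_of_one_lt hα1
  -- summability of the measures
  have hsummeas : Summable (fun n => (μ (s n)).toReal) := by
    apply Summable.of_norm_bounded_eventually_nat (g := fun n => 3 * (1 / α) ^ n)
    · exact (summable_geometric_of_lt_one (by positivity)
        (by rw [div_lt_one hα0]; exact hα1)).mul_left 3
    · filter_upwards [htend.eventually hub] with n hn
      rw [Real.norm_eq_abs, abs_of_nonneg ENNReal.toReal_nonneg, hkey n]
      refine hn.trans_eq ?_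
      rw [one_div, inv_pow, div_eq_mul_inv]
  -- Borel–Cantelli
  have hne : (∑' n, μ (s n)) ≠ ⊤ := by
    have heq : ∀ n, μ (s n) = ENNReal.ofReal ((μ (s n)).toReal) := fun n =>
      (ENNReal.ofReal_toReal (measure_ne_top μ _)).symm
    calc (∑' n, μ (s n)) = ∑' n, ENNReal.ofReal ((μ (s n)).toReal) := by
          exact tsum_congr heq
      _ = ENNReal.ofReal (∑' n, (μ (s n)).toReal) :=
          (ENNReal.ofReal_tsum_of_nonneg (fun n => ENNReal.toReal_nonneg) hsummeas).symm
      _ ≠ ⊤ := ENNReal.ofReal_ne_top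
  filter_upwards [MeasureTheory.ae_eventually_notMem hne] with ω hω
  apply Summable.of_norm_bounded_eventually_nat (g := fun n => (α / β) ^ n)
  · exact summable_geometric_of_lt_one (by positivity)
      ((div_lt_one hβ0).mpr hαβ)
  · filter_upwards [hω] with n hn
    have hn' : |η n ω| ≤ α ^ n := le_of_not_gt hn
    have hβn : (0:ℝ) < β ^ n := pow_pos hβ0 n
    rw [Real.norm_eq_abs, abs_div, abs_of_pos hβn, div_pow]
    gcongr
end

section
/- If G(x) = 1 - 1/ln x for x ≥ e is the distribution function of ν, then its Laplace transform satisfies 1 - φ(u) ~ -1/ln u as u → 0⁺, and consequently P(η > x) = 1 - φ(e^{-x}) ~ 1/x as x → +∞, where η has distribution function x ↦ φ(e^{-x}). -/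
open MeasureTheory Filter

/-- If `ν` has distribution function `G(x) = 1 - 1/ln x` for `x ≥ e`, then its
Laplace transform satisfies `1 - φ(u) ~ -1/ln u` as `u → 0⁺`, and consequently
`P(η > x) = 1 - φ(e^{-x}) ~ 1/x` as `x → +∞`. -/
theorem superheavy_laplace_asymptotics
    {Ω : Type*} [MeasurableSpace Ω] (μ : Measure Ω) [IsProbabilityMeasure μ]
    (ν : Ω → ℝ) (hν : Measurable ν) (hνe : ∀ᵐ ω ∂μ, Real.exp 1 ≤ ν ω)
    (hcdf : ∀ x : ℝ, Real.exp 1 ≤ x → (μ {ω | ν ω ≤ x}).toReal = 1 - 1 / Real.log x)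
    (φ : ℝ → ℝ) (hφ : ∀ u : ℝ, 0 ≤ u → φ u = ∫ ω, Real.exp (-u * ν ω) ∂μ) :
    Tendsto (fun u : ℝ => (1 - φ u) / (-1 / Real.log u)) (nhdsWithin 0 (Set.Ioi 0)) (nhds 1) ∧
    Tendsto (fun x : ℝ => (1 - φ (Real.exp (-x))) / (1 / x)) atTop (nhds 1) := by
  have hE0 : (0:ℝ) < Real.exp 1 := Real.exp_pos 1
  have hE1 : (1:ℝ) ≤ Real.exp 1 := by
    have := Real.add_one_le_exp 1; linarith
  -- tail probabilities
  have htail : ∀ x : ℝ, Real.exp 1 ≤ x →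
      (μ {ω | x < ν ω}).toReal = 1 / Real.log x := by
    intro x hx
    have hm : MeasurableSet {ω | ν ω ≤ x} := hν measurableSet_Iic
    have hset : {ω | x < ν ω} = {ω | ν ω ≤ x}ᶜ := by ext ω; simp [not_le]
    rw [hset, measure_compl hm (measure_ne_top μ _), measure_univ,
      ENNReal.toReal_sub_of_le prob_le_one ENNReal.one_ne_top, ENNReal.toReal_one, hcdf x hx]
    ring
  -- integrability
  have hint : ∀ u : ℝ, 0 ≤ u → Integrable (fun ω => Real.exp (-u * ν ω)) μ := by
    intro u hu
    refine ⟨((hν.const_mul (-u)).exp).aestronglyMeasurable, ?_⟩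
    apply HasFiniteIntegral.of_bounded (C := 1)
    filter_upwards [hνe] with ω hω
    rw [Real.norm_eq_abs, abs_of_pos (Real.exp_pos _)]
    refine Real.exp_le_one_iff.2 ?_
    have hν0 : (0:ℝ) ≤ ν ω := le_trans hE0.le hω
    nlinarith
  have hφ' : ∀ u : ℝ, 0 ≤ u →
      1 - φ u = ∫ ω, (1 - Real.exp (-u * ν ω)) ∂μ := by
    intro u hu
    rw [hφ u hu, integral_sub (integrable_const 1) (hint u hu), integral_const,
      measureReal_def, measure_univ, ENNReal.toReal_one, one_smul]
  -- lower bound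
  have hlow : ∀ u T : ℝ, 0 < u → 0 < T → Real.exp 1 ≤ T / u →
      (1 - Real.exp (-T)) * (1 / Real.log (T / u)) ≤ 1 - φ u := by
    intro u T hu hT hTu
    rw [hφ' u hu.le]
    have hmA : MeasurableSet {ω | T / u < ν ω} := hν measurableSet_Ioi
    have h1 : ∫ ω, Set.indicator {ω | T / u < ν ω}
        (fun _ => 1 - Real.exp (-T)) ω ∂μ
        = (1 - Real.exp (-T)) * (1 / Real.log (T / u)) := by
      rw [integral_indicator_const _ hmA, measureReal_def, htail _ hTu, smul_eq_mul, mul_comm]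
    rw [← h1]
    refine integral_mono_ae ((integrable_const _).indicator hmA)
      ((integrable_const 1).sub (hint u hu.le)) ?_
    filter_upwards [hνe] with ω hω
    by_cases h : T / u < ν ω
    · have hmem : ω ∈ {ω | T / u < ν ω} := h
      rw [Set.indicator_of_mem hmem]
      have h1 : T ≤ u * ν ω := by
        rw [div_lt_iff₀ hu] at h; nlinarith
      have h2 := Real.exp_le_exp.2 (neg_le_neg h1)
      have heq : -u * ν ω = -(u * ν ω) := by ring
      rw [heq]
      linarith
    · have hmem : ω ∉ {ω | T / u < ν ω} := h
      rw [Set.indicator_of_notMem hmem]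
      have hν0 : (0:ℝ) ≤ ν ω := le_trans hE0.le hω
      have : Real.exp (-u * ν ω) ≤ 1 := Real.exp_le_one_iff.2 (by nlinarith)
      linarith
  -- upper bound
  have hup : ∀ u A : ℝ, 0 < u → Real.exp 1 ≤ A →
      1 - φ u ≤ u * A + 1 / Real.log A := by
    intro u A hu hA
    rw [hφ' u hu.le]
    have hmA : MeasurableSet {ω | A < ν ω} := hν measurableSet_Ioi
    have h1 : ∫ ω, (u * A + Set.indicator {ω | A < ν ω} (fun _ => (1:ℝ)) ω) ∂μ
        = u * A + 1 / Real.log A := by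
      rw [integral_add (integrable_const _) ((integrable_const _).indicator hmA),
        integral_const, measureReal_def, measure_univ, integral_indicator_const _ hmA, measureReal_def, htail _ hA]
      simp
    rw [← h1]
    have hA0 : (0:ℝ) < A := lt_of_lt_of_le hE0 hA
    refine integral_mono ((integrable_const 1).sub (hint u hu.le))
      ((integrable_const _).add ((integrable_const _).indicator hmA)) ?_
    intro ω
    simp only
    by_cases h : A < ν ω
    · have hmem : ω ∈ {ω | A < ν ω} := h
      rw [Set.indicator_of_mem hmem]
      have : (0:ℝ) ≤ Real.exp (-u * ν ω) := (Real.exp_pos _).le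
      nlinarith
    · have hmem : ω ∉ {ω | A < ν ω} := h
      rw [Set.indicator_of_notMem hmem]
      push_neg at h
      have h1 : -u * ν ω + 1 ≤ Real.exp (-u * ν ω) := Real.add_one_le_exp _
      have h2 : u * ν ω ≤ u * A := mul_le_mul_of_nonneg_left h hu.le
      nlinarith
  -- key asymptotic
  have key : Tendsto (fun u : ℝ => (1 - φ u) * (-Real.log u))
      (nhdsWithin 0 (Set.Ioi 0)) (nhds 1) := by
    rw [Metric.tendsto_nhds]
    intro ε hε
    obtain ⟨e', he'def⟩ : ∃ x : ℝ, x = min ε 1 := ⟨_, rfl⟩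
    have he'0 : 0 < e' := by rw [he'def]; exact lt_min hε one_pos
    have he'1 : e' ≤ 1 := by rw [he'def]; exact min_le_right _ _
    have he'ε : e' ≤ ε := by rw [he'def]; exact min_le_left _ _
    obtain ⟨T, hTdef⟩ : ∃ x : ℝ, x = max 1 (Real.log (2 / e')) := ⟨_, rfl⟩
    have hT1 : (1:ℝ) ≤ T := by rw [hTdef]; exact le_max_left _ _
    have hT0 : (0:ℝ) < T := lt_of_lt_of_le one_pos hT1
    have hlogT : (0:ℝ) ≤ Real.log T := Real.log_nonneg hT1
    have hTexp : Real.exp (-T) ≤ e' / 2 := by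
      have h1 : Real.log (2 / e') ≤ T := by rw [hTdef]; exact le_max_right _ _
      have h2 : Real.exp (-T) ≤ Real.exp (-Real.log (2 / e')) :=
        Real.exp_le_exp.2 (neg_le_neg h1)
      have h3 : (0:ℝ) < 2 / e' := by positivity
      have h4 : Real.exp (-Real.log (2 / e')) = e' / 2 := by
        rw [Real.exp_neg, Real.exp_log h3, inv_div]
      linarith
    obtain ⟨δ, hδdef⟩ : ∃ x : ℝ, x = e' / (e' + 2) := ⟨_, rfl⟩
    have hδ0 : 0 < δ := by rw [hδdef]; positivity
    have hδ1 : δ < 1 := by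
      rw [hδdef, div_lt_one (by linarith)]; linarith
    have hinvδ : 1 / (1 - δ) = 1 + e' / 2 := by
      rw [hδdef]
      field_simp
      ring
    -- eventual conditions
    have ev1 : ∀ᶠ u in nhdsWithin (0:ℝ) (Set.Ioi 0), u < 1 :=
      eventually_nhdsWithin_of_eventually_nhds (gt_mem_nhds one_pos)
    have ev2 : ∀ᶠ u in nhdsWithin (0:ℝ) (Set.Ioi 0), u < T / Real.exp 1 :=
      eventually_nhdsWithin_of_eventually_nhds (gt_mem_nhds (by positivity))
    have ev3 : ∀ᶠ u in nhdsWithin (0:ℝ) (Set.Ioi 0),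
        (2 / e') * Real.log T ≤ -Real.log u := by
      have h := tendsto_neg_atBot_atTop.comp Real.tendsto_log_nhdsGT_zero
      exact h.eventually_ge_atTop _
    have ev4 : ∀ᶠ u in nhdsWithin (0:ℝ) (Set.Ioi 0),
        1 / (1 - δ) ≤ -Real.log u := by
      have h := tendsto_neg_atBot_atTop.comp Real.tendsto_log_nhdsGT_zero
      exact h.eventually_ge_atTop _
    have ev5 : ∀ᶠ u in nhdsWithin (0:ℝ) (Set.Ioi 0),
        u ^ δ * (-Real.log u) < e' / 2 := by
      have h := (tendsto_log_mul_rpow_nhdsGT_zero hδ0).neg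
      rw [neg_zero] at h
      have h2 := h.eventually_lt_const (show (0:ℝ) < e' / 2 by positivity)
      refine h2.mono fun u hu => ?_
      calc u ^ δ * (-Real.log u) = -(Real.log u * u ^ δ) := by ring
        _ < e' / 2 := hu
    filter_upwards [ev1, ev2, ev3, ev4, ev5, self_mem_nhdsWithin]
      with u h1 h2 h3 h4 h5 hu0
    have hu : (0:ℝ) < u := hu0
    obtain ⟨L, hLdef⟩ : ∃ x : ℝ, x = -Real.log u := ⟨_, rfl⟩
    rw [← hLdef] at h3 h4 h5 ⊢
    have hL0 : 0 < L := by
      rw [hLdef, neg_pos]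
      exact Real.log_neg hu h1
    -- lower estimate
    have hTu : Real.exp 1 ≤ T / u := by
      rw [le_div_iff₀ hu]
      rw [lt_div_iff₀ hE0] at h2
      linarith [mul_comm u (Real.exp 1)]
    have hlogTu : Real.log (T / u) = Real.log T + L := by
      rw [Real.log_div (ne_of_gt hT0) (ne_of_gt hu), hLdef]; ring
    have hlogTu0 : 0 < Real.log T + L := by linarith
    have hlower : 1 - e' < (1 - φ u) * L := by
      have hb := hlow u T hu hT0 hTu
      have hψ : (1 - Real.exp (-T)) * (L / (Real.log T + L)) ≤ (1 - φ u) * L := by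
        have := mul_le_mul_of_nonneg_right hb hL0.le
        calc (1 - Real.exp (-T)) * (L / (Real.log T + L))
            = (1 - Real.exp (-T)) * (1 / Real.log (T / u)) * L := by
              rw [hlogTu]; field_simp
          _ ≤ (1 - φ u) * L := this
      have hfac : 1 - e' / 2 ≤ L / (Real.log T + L) := by
        rw [le_div_iff₀ hlogTu0]
        have h3' := mul_le_mul_of_nonneg_left h3 (by positivity : (0:ℝ) ≤ e' / 2)
        have he'ne : e' ≠ 0 := ne_of_gt he'0
        have hid : (e' / 2) * ((2 / e') * Real.log T) = Real.log T := by
          field_simp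
        have : Real.log T ≤ (e' / 2) * L := by rw [hid] at h3'; exact h3'
        nlinarith
      have hfac1 : L / (Real.log T + L) ≤ 1 := by
        rw [div_le_one hlogTu0]; linarith
      have he2 : 1 - Real.exp (-T) ≥ 1 - e' / 2 := by linarith
      have hePos : (0:ℝ) ≤ 1 - e' / 2 := by linarith
      have hprod : (1 - e' / 2) * (1 - e' / 2) ≤
          (1 - Real.exp (-T)) * (L / (Real.log T + L)) := by
        apply mul_le_mul he2 hfac (by linarith) (by linarith [Real.exp_pos (-T)])
      have hexp2 : (1 - e' / 2) * (1 - e' / 2) = 1 - e' + e' * e' / 4 := by ring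
      linarith [mul_pos he'0 he'0, hprod, hψ]
    -- upper estimate
    have hupper : (1 - φ u) * L < 1 + e' := by
      obtain ⟨A, hAdef⟩ : ∃ x : ℝ, x = u ^ (δ - 1) := ⟨_, rfl⟩
      have h1δ' : 0 < 1 - δ := by linarith
      have hA : Real.exp 1 ≤ A := by
        rw [hAdef, ← Real.exp_log hu, ← Real.exp_mul]
        apply Real.exp_le_exp.2
        have hrw : Real.log u * (δ - 1) = (1 - δ) * L := by rw [hLdef]; ring
        rw [hrw]
        have hm := mul_le_mul_of_nonneg_left h4 h1δ'.le
        have hid : (1 - δ) * (1 / (1 - δ)) = 1 := by field_simp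
        linarith
      have hb := hup u A hu hA
      have hlogA : Real.log A = (1 - δ) * L := by
        rw [hAdef, Real.log_rpow hu, hLdef]; ring
      have huA : u * A = u ^ δ := by
        have : u * A = u ^ (1:ℝ) * u ^ (δ - 1) := by rw [Real.rpow_one, hAdef]
        rw [this, ← Real.rpow_add hu]
        norm_num
      have h1δ : 0 < 1 - δ := by linarith
      have : (1 - φ u) * L ≤ u ^ δ * L + 1 / (1 - δ) := by
        have := mul_le_mul_of_nonneg_right hb hL0.le
        calc (1 - φ u) * L ≤ (u * A + 1 / Real.log A) * L := this
          _ = u ^ δ * L + 1 / (1 - δ) := by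
              rw [huA, hlogA]
              field_simp
      rw [hinvδ] at this
      have h5' : u ^ δ * L < e' / 2 := h5
      linarith
    rw [Real.dist_eq, abs_sub_lt_iff]
    exact ⟨by linarith [he'ε], by linarith [he'ε]⟩
  constructor
  · -- first claim
    have heq : ∀ᶠ u in nhdsWithin (0:ℝ) (Set.Ioi 0),
        (1 - φ u) * (-Real.log u) = (1 - φ u) / (-1 / Real.log u) := by
      filter_upwards [eventually_nhdsWithin_of_eventually_nhds
        (gt_mem_nhds (one_pos : (0:ℝ) < 1)), self_mem_nhdsWithin] with u h1 hu0
      have hu : (0:ℝ) < u := hu0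
      have hlog : Real.log u ≠ 0 := ne_of_lt (Real.log_neg hu h1)
      field_simp
    exact key.congr' heq
  · -- second claim
    have hcomp : Tendsto (fun x : ℝ => Real.exp (-x)) atTop
        (nhdsWithin (0:ℝ) (Set.Ioi 0)) := by
      apply tendsto_nhdsWithin_of_tendsto_nhds_of_eventually_within
      · exact Real.tendsto_exp_atBot.comp tendsto_neg_atTop_atBot
      · exact Eventually.of_forall fun x => Real.exp_pos _
    have h := key.comp hcomp
    refine h.congr' ?_
    filter_upwards [eventually_gt_atTop (0:ℝ)] with x hx
    simp only [Function.comp_apply, Real.log_exp]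
    rw [div_div_eq_mul_div, div_one]
    ring
end

section
/- Convexity inequality for the mixing condition: if φ : [0,∞) → (0,1] is convex and decreasing, then for all 0 < u₁ ≤ u ≤ u₂ and values 0 ≤ a' ≤ b' (playing the roles of -ln F(a) ≥ -ln F(b) ≥ 0), one has φ(u·b') - φ(u·a') ≥ (u₁/u₂)·(φ(u₂·b') - φ(u₂·a')). -/
open Set

/-- Convexity inequality used for the mixing condition: if `φ : [0,∞) → (0,1]`
is convex and nonincreasing, then for `0 < u₁ ≤ u ≤ u₂` and `0 ≤ b' ≤ a'`
(with `b' = -ln F(b)`, `a' = -ln F(a)`, `a < b`, so both differences below are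
nonnegative), one has `φ(u·b') - φ(u·a') ≥ (u₁/u₂)·(φ(u₂·b') - φ(u₂·a'))`. -/
theorem convex_mixing_inequality
    (φ : ℝ → ℝ) (hconv : ConvexOn ℝ (Ici 0) φ) (hanti : AntitoneOn φ (Ici 0))
    (hrange : ∀ u ∈ Ici (0:ℝ), φ u ∈ Ioc (0:ℝ) 1)
    (u₁ u u₂ : ℝ) (hu₁ : 0 < u₁) (h₁ : u₁ ≤ u) (h₂ : u ≤ u₂)
    (a' b' : ℝ) (hb' : 0 ≤ b') (hba : b' ≤ a') :
    u₁ / u₂ * (φ (u₂ * b') - φ (u₂ * a')) ≤ φ (u * b') - φ (u * a') := by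
  have hu : 0 < u := lt_of_lt_of_le hu₁ h₁
  have hu₂ : 0 < u₂ := lt_of_lt_of_le hu h₂
  rcases eq_or_lt_of_le hba with rfl | hba'
  · simp
  have ha' : 0 < a' := lt_of_le_of_lt hb' hba'
  -- memberships
  have m1 : u * b' ∈ Ici (0:ℝ) := mul_nonneg hu.le hb'
  have m2 : u * a' ∈ Ici (0:ℝ) := mul_nonneg hu.le ha'.le
  have m3 : u₂ * b' ∈ Ici (0:ℝ) := mul_nonneg hu₂.le hb'
  have m4 : u₂ * a' ∈ Ici (0:ℝ) := mul_nonneg hu₂.le ha'.le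
  have hub_ua : u * b' < u * a' := by nlinarith
  have hub_u2a : u * b' < u₂ * a' := by nlinarith
  have hu2b_u2a : u₂ * b' < u₂ * a' := by nlinarith
  -- slope comparisons
  have slope1 : (φ (u * a') - φ (u * b')) / (u * a' - u * b')
      ≤ (φ (u₂ * a') - φ (u * b')) / (u₂ * a' - u * b') := by
    apply hconv.secant_mono m1 m2 m4 hub_ua.ne' hub_u2a.ne'
    nlinarith
  have slope2 : (φ (u * b') - φ (u₂ * a')) / (u * b' - u₂ * a')
      ≤ (φ (u₂ * b') - φ (u₂ * a')) / (u₂ * b' - u₂ * a') := by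
    apply hconv.secant_mono m4 m1 m3 hub_u2a.ne hu2b_u2a.ne
    nlinarith
  have eq1 : (φ (u * b') - φ (u₂ * a')) / (u * b' - u₂ * a')
      = (φ (u₂ * a') - φ (u * b')) / (u₂ * a' - u * b') := by
    rw [← neg_div_neg_eq]; ring_nf
  rw [eq1] at slope2
  have key : (φ (u * a') - φ (u * b')) / (u * a' - u * b')
      ≤ (φ (u₂ * b') - φ (u₂ * a')) / (u₂ * b' - u₂ * a') := slope1.trans slope2
  have hanti' : φ (u₂ * a') ≤ φ (u₂ * b') := hanti m3 m4 hu2b_u2a.le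
  have hd1 : 0 < u * a' - u * b' := by linarith
  have hd2 : 0 < u₂ * a' - u₂ * b' := by linarith
  have eq2 : (φ (u₂ * b') - φ (u₂ * a')) / (u₂ * b' - u₂ * a')
      = (φ (u₂ * a') - φ (u₂ * b')) / (u₂ * a' - u₂ * b') := by
    rw [← neg_div_neg_eq]; ring_nf
  rw [eq2, div_le_div_iff₀ hd1 hd2] at key
  rw [div_mul_eq_mul_div, div_le_iff₀ hu₂]
  nlinarith [key, mul_nonneg (sub_nonneg.2 hanti')
    (sub_nonneg.2 (show u₁ * (a' - b') ≤ u * (a' - b') by nlinarith))]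
end
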